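/- arXiv:math/0512251 — 2 statements merged into one kernel-verified Lean document; each statement's English description precedes it below -/
import Mathlib

section
/- Let G be a topological abelian group and H ⊆ G an open subgroup that is divisible. Then every continuous homomorphism h : H → ℝ/ℤ extends to a continuous homomorphism G → ℝ/ℤ. -/
/-- If `G` is a topological abelian group and `H ⊆ G` is an open
subgroup which is divisible, then every continuous homomorphism `h : H → ℝ/ℤ`
extends to a continuous homomorphism `G → ℝ/ℤ`. -/
theorem stmt4 {G : Type*} [AddCommGroup G] [TopologicalSpace G] [IsTopologicalAddGroup G]
    (H : AddSubgroup G) (hopen : IsOpen (H : Set G))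
    (hdiv : ∀ (x : H) (n : ℕ), n ≠ 0 → ∃ y : H, n • y = x)
    (h : ContinuousAddMonoidHom H (AddCircle (1 : ℝ))) :
    ∃ h' : ContinuousAddMonoidHom G (AddCircle (1 : ℝ)), ∀ x : H, h' (x : G) = h x := by
  obtain ⟨φ, hφ⟩ := (Module.Baer.of_divisible (AddCircle (1 : ℝ))).extension_property_addMonoidHom
    H.subtype Subtype.val_injective h.toAddMonoidHom
  have hφ' : ∀ x : H, φ (x : G) = h x := fun x => DFunLike.congr_fun hφ x
  have hcontOn : ContinuousOn φ (H : Set G) := by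
    rw [continuousOn_iff_continuous_restrict]
    have : (H : Set G).restrict φ = fun x => h x := by
      funext x; exact hφ' x
    change Continuous ((H : Set G).restrict φ)
    rw [this]
    exact h.continuous
  have hcont : Continuous φ := by
    refine continuous_of_continuousAt_zero φ ?_
    exact hcontOn.continuousAt (hopen.mem_nhds H.zero_mem)
  exact ⟨⟨φ, hcont⟩, hφ'⟩
end

section
/- Every continuous group homomorphism h : V → ℝ/ℤ from a real topological vector space V lifts uniquely to a continuous linear functional (continuous additive map) h̃ : V → ℝ with π ∘ h̃ = h, where π : ℝ → ℝ/ℤ is the projection. -/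
open Set Filter Topology

namespace Stmt12Aux

local instance : Fact ((0:ℝ) < 1) := ⟨one_pos⟩

/-- Representative of a point of `ℝ/ℤ` in `(-1/2, 1/2]`. -/
noncomputable def gb (x : AddCircle (1:ℝ)) : ℝ :=
  (AddCircle.equivIoc 1 (-(1/2)) x : ℝ)

lemma gb_coe (x : AddCircle (1:ℝ)) : ((gb x : ℝ) : AddCircle (1:ℝ)) = x :=
  (AddCircle.equivIoc 1 (-(1/2))).symm_apply_apply x

lemma gb_mem (x : AddCircle (1:ℝ)) : gb x ∈ Ioc (-(1/2):ℝ) (1/2) := by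
  have := (AddCircle.equivIoc 1 (-(1/2)) x).2
  norm_num at this ⊢
  exact this

lemma gb_abs (x : AddCircle (1:ℝ)) : |gb x| ≤ 1/2 := by
  have := gb_mem x
  rw [abs_le]
  constructor <;> [linarith [this.1]; exact this.2]

lemma coe_eq_int {s t : ℝ} (hst : (s : AddCircle (1:ℝ)) = t) : ∃ k : ℤ, s - t = k := by
  have : ((s - t : ℝ) : AddCircle (1:ℝ)) = 0 := by
    rw [AddCircle.coe_sub, hst, sub_self]
  rw [AddCircle.coe_eq_zero_iff] at this
  obtain ⟨n, hn⟩ := this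
  exact ⟨n, by rw [← hn]; simp⟩

lemma eq_of_close {s t : ℝ} (hst : (s : AddCircle (1:ℝ)) = t) (hd : |s - t| < 1) : s = t := by
  obtain ⟨k, hk⟩ := coe_eq_int hst
  have hk0 : k = 0 := by
    by_contra hne
    have h1 : (1:ℝ) ≤ |(k:ℝ)| := by
      have := Int.one_le_abs hne
      calc (1:ℝ) = ((1:ℤ):ℝ) := by norm_num
        _ ≤ ((|k|:ℤ):ℝ) := by exact_mod_cast this
        _ = |(k:ℝ)| := by push_cast; ring
    rw [hk] at hd; linarith
  have : s - t = 0 := by rw [hk, hk0]; norm_num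
  linarith

lemma abs_sub' (a b : ℝ) : |a - b| ≤ |a| + |b| := by
  rw [sub_eq_add_neg]
  exact (abs_add_le _ _).trans (by rw [abs_neg])

lemma gb_eq_self {s : ℝ} (hs : s ∈ Ioc (-(1/2):ℝ) (1/2)) : gb (s : AddCircle (1:ℝ)) = s := by
  apply eq_of_close (gb_coe _)
  have h1 := gb_mem (s : AddCircle (1:ℝ))
  rw [abs_lt]
  constructor <;> [linarith [h1.1, hs.2]; linarith [h1.2, hs.1]]

section Main

variable {V : Type*} [AddCommGroup V] [Module ℝ V] [TopologicalSpace V]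
    [IsTopologicalAddGroup V] [ContinuousSMul ℝ V]
    (h : V →+ AddCircle (1 : ℝ)) (hc : Continuous h)

/-- the candidate local lift -/
noncomputable def g (v : V) : ℝ := gb (h v)

lemma g_coe (v : V) : ((g h v : ℝ) : AddCircle (1:ℝ)) = h v := gb_coe _

lemma zsmul_pow_inv (n : ℕ) (v : V) : (2^n : ℤ) • (((2:ℝ)^n)⁻¹ • v) = v := by
  rw [← Int.cast_smul_eq_zsmul ℝ, smul_smul]
  push_cast
  rw [mul_inv_cancel₀ (by positivity), one_smul]

lemma coe_int_mul (k : ℤ) (r : ℝ) :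
    (((k : ℝ) * r : ℝ) : AddCircle (1:ℝ)) = k • ((r : ℝ) : AddCircle (1:ℝ)) := by
  rw [← AddCircle.coe_zsmul]
  congr 1
  rw [zsmul_eq_mul]

lemma step {w : V} (h1 : |g h w| ≤ 1/4) (h2 : |g h ((2:ℝ)⁻¹ • w)| ≤ 1/4) :
    2 * g h ((2:ℝ)⁻¹ • w) = g h w := by
  apply eq_of_close
  · have e1 : ((2 * g h ((2:ℝ)⁻¹ • w) : ℝ) : AddCircle (1:ℝ))
        = (2:ℤ) • ((g h ((2:ℝ)⁻¹ • w) : ℝ) : AddCircle (1:ℝ)) := by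
      have := coe_int_mul 2 (g h ((2:ℝ)⁻¹ • w))
      push_cast at this
      exact this
    calc ((2 * g h ((2:ℝ)⁻¹ • w) : ℝ) : AddCircle (1:ℝ))
        = (2:ℤ) • ((g h ((2:ℝ)⁻¹ • w) : ℝ) : AddCircle (1:ℝ)) := e1
      _ = (2:ℤ) • h ((2:ℝ)⁻¹ • w) := by rw [g_coe]
      _ = h ((2:ℤ) • ((2:ℝ)⁻¹ • w)) := (map_zsmul h _ _).symm
      _ = h w := by
          congr 1
          have := zsmul_pow_inv (n := 1) w
          simpa using this
      _ = ((g h w : ℝ) : AddCircle (1:ℝ)) := (g_coe h w).symm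
  · have h3 : |2 * g h ((2:ℝ)⁻¹ • w)| ≤ 1/2 := by
      rw [abs_mul]
      norm_num
      linarith
    calc |2 * g h ((2:ℝ)⁻¹ • w) - g h w| ≤ |2 * g h ((2:ℝ)⁻¹ • w)| + |g h w| := abs_sub' _ _
      _ < 1 := by linarith

/-- the rescaled sequence -/
noncomputable def u (v : V) (n : ℕ) : ℝ := 2^n * g h (((2:ℝ)^n)⁻¹ • v)

lemma coe_u (v : V) (n : ℕ) : ((u h v n : ℝ) : AddCircle (1:ℝ)) = h v := by
  have e1 := coe_int_mul (2^n) (g h (((2:ℝ)^n)⁻¹ • v))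
  push_cast at e1
  calc ((u h v n : ℝ) : AddCircle (1:ℝ))
      = (2^n : ℤ) • ((g h (((2:ℝ)^n)⁻¹ • v) : ℝ) : AddCircle (1:ℝ)) := e1
    _ = (2^n : ℤ) • (h (((2:ℝ)^n)⁻¹ • v)) := by rw [g_coe]
    _ = h ((2^n : ℤ) • (((2:ℝ)^n)⁻¹ • v)) := (map_zsmul h _ _).symm
    _ = h v := by rw [zsmul_pow_inv]

lemma g_add {x y : V} (hx : |g h x| ≤ 1/4) (hy : |g h y| ≤ 1/4)
    (hxy : |g h (x + y)| ≤ 1/4) : g h (x + y) = g h x + g h y := by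
  apply eq_of_close
  · calc ((g h (x + y) : ℝ) : AddCircle (1:ℝ)) = h (x + y) := g_coe h _
      _ = h x + h y := map_add h x y
      _ = ((g h x : ℝ) : AddCircle (1:ℝ)) + ((g h y : ℝ) : AddCircle (1:ℝ)) := by
          rw [g_coe, g_coe]
      _ = ((g h x + g h y : ℝ) : AddCircle (1:ℝ)) := by rw [AddCircle.coe_add]
  · calc |g h (x+y) - (g h x + g h y)| ≤ |g h (x+y)| + |g h x + g h y| := abs_sub' _ _
      _ ≤ |g h (x+y)| + (|g h x| + |g h y|) := by linarith [abs_add_le (g h x) (g h y)]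
      _ < 1 := by linarith

lemma tendsto_pow_inv_smul (v : V) :
    Tendsto (fun n : ℕ => ((2:ℝ)^n)⁻¹ • v) atTop (𝓝 0) := by
  have h1 : Tendsto (fun n : ℕ => ((2:ℝ)^n)⁻¹) atTop (𝓝 0) := by
    simpa [inv_pow] using
      tendsto_pow_atTop_nhds_zero_of_lt_one (by norm_num : (0:ℝ) ≤ 2⁻¹) (by norm_num)
  simpa using h1.smul_const v

lemma succ_smul_eq (n : ℕ) (v : V) :
    ((2:ℝ)⁻¹ • (((2:ℝ)^n)⁻¹ • v)) = ((2:ℝ)^(n+1))⁻¹ • v := by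
  rw [smul_smul, ← mul_inv, ← pow_succ']

include hc

lemma small_nhds : ∀ᶠ w in 𝓝 (0:V), |g h w| ≤ 1/4 := by
  have hC : {x : AddCircle (1:ℝ) | |gb x| ≤ 1/4} ∈ 𝓝 (0 : AddCircle (1:ℝ)) := by
    have hopen : IsOpen (((↑) : ℝ → AddCircle (1:ℝ)) '' Ioo (-(1/8)) (1/8)) :=
      QuotientAddGroup.isOpenMap_coe _ isOpen_Ioo
    apply mem_nhds_iff.2
    refine ⟨_, ?_, hopen, ⟨0, by norm_num, rfl⟩⟩
    rintro x ⟨s, hs, rfl⟩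
    have : gb (s : AddCircle (1:ℝ)) = s :=
      gb_eq_self ⟨by linarith [hs.1], by linarith [hs.2]⟩
    simp only [mem_setOf_eq, this]
    rw [abs_le]; constructor <;> [linarith [hs.1]; linarith [hs.2]]
  have h0 : h 0 = 0 := map_zero h
  have := hc.continuousAt (x := (0:V))
  rw [ContinuousAt, h0] at this
  exact this.eventually hC

lemma ev_small (v : V) : ∀ᶠ n : ℕ in atTop, |g h (((2:ℝ)^n)⁻¹ • v)| ≤ 1/4 :=
  (tendsto_pow_inv_smul v).eventually (small_nhds h hc)

lemma stab (v : V) : ∃ c : ℝ, ∀ᶠ n in atTop, u h v n = c := by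
  obtain ⟨N, hN⟩ := eventually_atTop.1 (ev_small h hc v)
  refine ⟨u h v N, eventually_atTop.2 ⟨N, ?_⟩⟩
  intro n hn
  induction n, hn using Nat.le_induction with
  | base => rfl
  | succ n hn ih =>
    rw [← ih]
    show (2:ℝ)^(n+1) * g h (((2:ℝ)^(n+1))⁻¹ • v) = (2:ℝ)^n * g h (((2:ℝ)^n)⁻¹ • v)
    have hs := step h (hN n hn) (w := ((2:ℝ)^n)⁻¹ • v)
      (by rw [succ_smul_eq]; exact hN (n+1) (by omega))
    rw [← hs, succ_smul_eq]
    ring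

noncomputable def htil (v : V) : ℝ := (stab h hc v).choose

lemma htil_spec (v : V) : ∀ᶠ n in atTop, u h v n = htil h hc v := (stab h hc v).choose_spec

lemma htil_eq {v : V} {c : ℝ} (hev : ∀ᶠ n in atTop, u h v n = c) : htil h hc v = c := by
  obtain ⟨n, h1, h2⟩ := ((htil_spec h hc v).and hev).exists
  rw [← h1, h2]

lemma coe_htil (v : V) : ((htil h hc v : ℝ) : AddCircle (1:ℝ)) = h v := by
  obtain ⟨n, hn⟩ := (htil_spec h hc v).exists
  rw [← hn, coe_u]

lemma htil_add (v w : V) : htil h hc (v + w) = htil h hc v + htil h hc w := by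
  apply htil_eq
  filter_upwards [ev_small h hc v, ev_small h hc w, ev_small h hc (v + w),
    htil_spec h hc v, htil_spec h hc w] with n h1 h2 h3 h4 h5
  have e : ((2:ℝ)^n)⁻¹ • (v + w) = ((2:ℝ)^n)⁻¹ • v + ((2:ℝ)^n)⁻¹ • w := smul_add _ _ _
  rw [e] at h3
  rw [← h4, ← h5]
  show (2:ℝ)^n * g h (((2:ℝ)^n)⁻¹ • (v + w)) = (2:ℝ)^n * g h _ + (2:ℝ)^n * g h _
  rw [e, g_add h h1 h2 h3]
  ring

/-- bundled lift -/
noncomputable def F : V →+ ℝ := AddMonoidHom.mk' (htil h hc) (htil_add h hc)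

lemma F_apply (v : V) : F h hc v = htil h hc v := rfl

lemma htil_of_seg {v : V} (hv : ∀ t ∈ Icc (0:ℝ) 1, |g h (t • v)| ≤ 1/4) :
    htil h hc v = g h v := by
  apply htil_eq
  apply Eventually.of_forall
  intro n
  induction n with
  | zero => simp [u]
  | succ n ih =>
    rw [← ih]
    show (2:ℝ)^(n+1) * g h (((2:ℝ)^(n+1))⁻¹ • v) = (2:ℝ)^n * g h (((2:ℝ)^n)⁻¹ • v)
    have mem1 : ∀ m : ℕ, ((2:ℝ)^m)⁻¹ ∈ Icc (0:ℝ) 1 := by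
      intro m
      constructor
      · positivity
      · rw [inv_le_one_iff₀]; right; exact one_le_pow₀ (by norm_num)
    have hs := step h (hv _ (mem1 n)) (w := ((2:ℝ)^n)⁻¹ • v)
      (by rw [succ_smul_eq]; exact hv _ (mem1 (n+1)))
    rw [← hs, succ_smul_eq]
    ring

lemma W_mem : ∀ᶠ v in 𝓝 (0:V), ∀ t ∈ Icc (0:ℝ) 1, |g h (t • v)| ≤ 1/4 := by
  apply (isCompact_Icc (a := (0:ℝ)) (b := 1)).eventually_forall_of_forall_eventually
  intro t _
  have hφ : Tendsto (fun z : V × ℝ => z.2 • z.1) (𝓝 ((0:V), t)) (𝓝 0) := by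
    have hcont : Continuous (fun z : V × ℝ => z.2 • z.1) :=
      continuous_snd.smul continuous_fst
    have := hcont.continuousAt (x := ((0:V), t))
    rwa [ContinuousAt, smul_zero] at this
  exact hφ.eventually (small_nhds h hc)

lemma F_cont : Continuous (F h hc) := by
  apply continuous_of_continuousAt_zero (F h hc)
  rw [ContinuousAt, map_zero]
  rw [Metric.tendsto_nhds]
  intro ε hε
  obtain ⟨n, hn⟩ := exists_pow_lt_of_lt_one hε (by norm_num : (2:ℝ)⁻¹ < 1)
  have hsc : Tendsto (fun v : V => (2:ℝ)^n • v) (𝓝 0) (𝓝 0) := by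
    have := (continuous_const_smul ((2:ℝ)^n) : Continuous fun v : V => (2:ℝ)^n • v)
    have h2 := this.continuousAt (x := (0:V))
    rwa [ContinuousAt, smul_zero] at h2
  filter_upwards [hsc.eventually (W_mem h hc)] with v hv
  set w : V := (2:ℝ)^n • v with hw
  have hvw : F h hc w = 2^n * F h hc v := by
    have : (2^n : ℤ) • v = w := by
      rw [← Int.cast_smul_eq_zsmul ℝ]; push_cast; rfl
    rw [← this, map_zsmul]
    push_cast
    rw [zsmul_eq_mul]
    push_cast
    ring
  have hFw : F h hc w = g h w := htil_of_seg h hc hv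
  have hbd : |g h w| ≤ 1/4 := by
    have := hv 1 (by norm_num)
    rwa [one_smul] at this
  have hFv : |F h hc v| ≤ (1/4) * ((2:ℝ)^n)⁻¹ := by
    have h2n : (0:ℝ) < 2^n := by positivity
    have : F h hc v = g h w / 2^n := by
      rw [← hFw, hvw]; field_simp
    rw [this, abs_div, abs_of_pos h2n]
    rw [div_le_iff₀ h2n]
    calc |g h w| ≤ 1/4 := hbd
      _ = 1/4 * (2^n)⁻¹ * 2^n := by field_simp
  rw [Real.dist_eq, sub_zero]
  calc |F h hc v| ≤ (1/4) * ((2:ℝ)^n)⁻¹ := hFv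
    _ < ((2:ℝ)⁻¹)^n := by rw [inv_pow]; nlinarith [inv_pos.2 (show (0:ℝ) < 2^n by positivity)]
    _ < ε := hn

end Main

end Stmt12Aux

/-- Every continuous group homomorphism `h : V → ℝ/ℤ` from a real
topological vector space `V` lifts uniquely to a continuous additive map
`h̃ : V → ℝ` with `π ∘ h̃ = h`. -/
theorem stmt12 {V : Type*} [AddCommGroup V] [Module ℝ V] [TopologicalSpace V]
    [IsTopologicalAddGroup V] [ContinuousSMul ℝ V]
    (h : V →+ AddCircle (1 : ℝ)) (hc : Continuous h) :
    ∃! htil : V →+ ℝ, Continuous htil ∧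
      ∀ v : V, ((htil v : ℝ) : AddCircle (1 : ℝ)) = h v := by
  open Stmt12Aux in
  refine ⟨Stmt12Aux.F h hc, ⟨Stmt12Aux.F_cont h hc, fun v => Stmt12Aux.coe_htil h hc v⟩, ?_⟩
  rintro G ⟨hGc, hG⟩
  ext v
  have key : ∀ x : V, ∃ k : ℤ, G x - Stmt12Aux.F h hc x = k := by
    intro x
    apply Stmt12Aux.coe_eq_int
    rw [hG, Stmt12Aux.F_apply, Stmt12Aux.coe_htil]
  set D : V → ℝ := fun x => G x - Stmt12Aux.F h hc x with hD
  have hDcont : Continuous D := hGc.sub (Stmt12Aux.F_cont h hc)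
  have hD0 : D 0 = 0 := by simp [hD]
  have tend : Tendsto (fun n : ℕ => D (((2:ℝ)^n)⁻¹ • v)) atTop (𝓝 0) := by
    have := hDcont.continuousAt (x := (0:V))
    rw [ContinuousAt, hD0] at this
    exact this.comp (Stmt12Aux.tendsto_pow_inv_smul v)
  have ev : ∀ᶠ n : ℕ in atTop, |D (((2:ℝ)^n)⁻¹ • v)| < 1 := by
    have := tend.eventually (eventually_abs_sub_lt (0:ℝ) one_pos)
    simpa using this
  obtain ⟨n, hn⟩ := ev.exists
  have hz : D (((2:ℝ)^n)⁻¹ • v) = 0 := by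
    obtain ⟨k, hk⟩ := key (((2:ℝ)^n)⁻¹ • v)
    rw [show D (((2:ℝ)^n)⁻¹ • v) = (k:ℝ) from hk] at hn ⊢
    have : k = 0 := by
      by_contra hne
      have h1 := Int.one_le_abs hne
      have : (1:ℝ) ≤ |(k:ℝ)| := by
        calc (1:ℝ) = ((1:ℤ):ℝ) := by norm_num
          _ ≤ ((|k|:ℤ):ℝ) := by exact_mod_cast h1
          _ = |(k:ℝ)| := by push_cast; ring
      linarith
    rw [this]; norm_num
  have hsplit : D v = 2^n * D (((2:ℝ)^n)⁻¹ • v) := by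
    have e : (2^n : ℤ) • (((2:ℝ)^n)⁻¹ • v) = v := Stmt12Aux.zsmul_pow_inv n v
    have eG : G v = 2^n * G (((2:ℝ)^n)⁻¹ • v) := by
      conv_lhs => rw [← e]
      rw [map_zsmul, zsmul_eq_mul]; push_cast; ring
    have eF : Stmt12Aux.F h hc v = 2^n * Stmt12Aux.F h hc (((2:ℝ)^n)⁻¹ • v) := by
      conv_lhs => rw [← e]
      rw [map_zsmul, zsmul_eq_mul]; push_cast; ring
    simp only [hD, eG, eF]; ring
  have : D v = 0 := by rw [hsplit, hz]; ring
  have := sub_eq_zero.1 this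
  exact this
end
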